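/- With a₀ < ⋯ < a_m and f : ℝ → ℝ subharmonic (on all of ℝ), the piecewise harmonic interpolation I(f) at nodes a₀,…,a_m satisfies I(f) ≤ f on (−∞, a₀) and on (a_m, +∞), where I(f) is extended outside [a₀,a_m] by the harmonic functions f₀ and f_{m−1} respectively. -/

import Mathlib

/-- `f` is harmonic for `L f = β f' + (1/2) f''`. -/
def Harmonic (β : ℝ) (f : ℝ → ℝ) : Prop :=
  Differentiable ℝ f ∧ Differentiable ℝ (deriv f) ∧
    ∀ x, β * deriv f x + (1 / 2) * deriv (deriv f) x = 0

/-- `f` is subharmonic on `s` (comparison/maximum principle form). -/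
def SubharmonicOn (β : ℝ) (f : ℝ → ℝ) (s : Set ℝ) : Prop :=
  ∀ u v : ℝ, u < v → Set.Icc u v ⊆ s →
    ∀ h : ℝ → ℝ, Harmonic β h → f u ≤ h u → f v ≤ h v →
      ∀ x ∈ Set.Icc u v, f x ≤ h x

lemma hasDerivAt_Bexp (B c t : ℝ) :
    HasDerivAt (fun x => B * Real.exp (c * x)) (B * c * Real.exp (c * t)) t := by
  have h := (((hasDerivAt_id t).const_mul c).exp).const_mul B
  refine h.congr_deriv ?_
  simp [id]; ring

lemma harmonic_exp (β A B : ℝ) :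
    Harmonic β (fun t => A + B * Real.exp (-(2*β) * t)) := by
  have hD : ∀ t, HasDerivAt (fun x => A + B * Real.exp (-(2*β) * x))
      (B * -(2*β) * Real.exp (-(2*β) * t)) t :=
    fun t => (hasDerivAt_Bexp B (-(2*β)) t).const_add A
  have hd1 : deriv (fun x => A + B * Real.exp (-(2*β) * x))
      = fun t => (B * -(2*β)) * Real.exp (-(2*β) * t) := by
    funext t; exact (hD t).deriv
  refine ⟨fun t => (hD t).differentiableAt, ?_, ?_⟩
  · rw [hd1]; exact fun t => (hasDerivAt_Bexp _ _ t).differentiableAt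
  · intro x
    rw [hd1, (hasDerivAt_Bexp (B * -(2*β)) (-(2*β)) x).deriv]
    ring

lemma harmonic_linear (A B : ℝ) : Harmonic 0 (fun t => A + B * t) := by
  have hD : ∀ t : ℝ, HasDerivAt (fun x : ℝ => A + B * x) B t := by
    intro t
    have := ((hasDerivAt_id t).const_mul B).const_add A
    refine this.congr_deriv ?_; simp
  have hd1 : deriv (fun x : ℝ => A + B * x) = fun _ => B := by
    funext t; exact (hD t).deriv
  refine ⟨fun t => (hD t).differentiableAt, ?_, ?_⟩
  · rw [hd1]; exact differentiable_const B
  · intro x; rw [hd1]; simp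

lemma harmonic_interp (β u v p q : ℝ) (huv : u < v) :
    ∃ h : ℝ → ℝ, Harmonic β h ∧ h u = p ∧ h v = q := by
  have hvu : v - u ≠ 0 := sub_ne_zero.mpr huv.ne'
  by_cases hb : β = 0
  · subst hb
    refine ⟨fun t => (p + ((q - p)/(v - u)) * (-u)) + ((q - p)/(v - u)) * t,
      harmonic_linear _ _, by ring, ?_⟩
    field_simp
    ring
  · have hc : -(2*β) ≠ 0 := by intro h; apply hb; linarith [neg_eq_zero.mp h]
    have hne : Real.exp (-(2*β)*v) - Real.exp (-(2*β)*u) ≠ 0 := by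
      apply sub_ne_zero.mpr
      intro heq
      have h1 : -(2*β)*v = -(2*β)*u := Real.exp_injective heq
      have h2 : v = u := mul_left_cancel₀ hc h1
      exact huv.ne h2.symm
    refine ⟨fun t => (p - ((q - p)/(Real.exp (-(2*β)*v) - Real.exp (-(2*β)*u)))
        * Real.exp (-(2*β)*u))
        + ((q - p)/(Real.exp (-(2*β)*v) - Real.exp (-(2*β)*u))) * Real.exp (-(2*β)*t),
      harmonic_exp β _ _, by ring, ?_⟩
    have hkey : ((q - p)/(Real.exp (-(2*β)*v) - Real.exp (-(2*β)*u)))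
        * (Real.exp (-(2*β)*v) - Real.exp (-(2*β)*u)) = q - p :=
      div_mul_cancel₀ _ hne
    linear_combination hkey

lemma harmonic_deriv_eq (β : ℝ) (d : ℝ → ℝ) (hd : Harmonic β d) (x : ℝ) :
    deriv d x = deriv d 0 * Real.exp (-(2*β) * x) := by
  obtain ⟨h1, h2, h3⟩ := hd
  have hzero : ∀ y : ℝ, HasDerivAt (fun t => deriv d t * Real.exp ((2*β)*t)) 0 y := by
    intro y
    have hh := (h2 y).hasDerivAt.mul (((hasDerivAt_id y).const_mul (2*β)).exp)
    refine hh.congr_deriv ?_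
    have h3y := h3 y
    simp only [id]
    nlinarith [Real.exp_pos ((2*β)*y), h3y]
  have key := is_const_of_deriv_eq_zero (fun y => (hzero y).differentiableAt)
    (fun y => (hzero y).deriv) x 0
  simp only [mul_zero, Real.exp_zero, mul_one] at key
  have hne : Real.exp ((2*β)*x) ≠ 0 := (Real.exp_pos _).ne'
  have hex : Real.exp (-(2*β)*x) = (Real.exp ((2*β)*x))⁻¹ := by
    rw [← Real.exp_neg]; ring_nf
  rw [hex]
  field_simp
  linarith [key]

lemma harm_left (β u v : ℝ) (d : ℝ → ℝ) (hd : Harmonic β d) (huv : u < v)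
    (h2 : d v ≤ d u) : ∀ x, x ≤ u → d u ≤ d x := by
  rcases le_or_gt (deriv d 0) 0 with hc | hc
  · have hanti : Antitone d := by
      apply antitone_of_deriv_nonpos hd.1
      intro y
      rw [harmonic_deriv_eq β d hd y]
      exact mul_nonpos_of_nonpos_of_nonneg hc (Real.exp_pos _).le
    exact fun x hx => hanti hx
  · have hmono : StrictMono d := by
      apply strictMono_of_deriv_pos
      intro y
      rw [harmonic_deriv_eq β d hd y]
      exact mul_pos hc (Real.exp_pos _)
    exact absurd h2 (not_le.mpr (hmono huv))

lemma harm_right (β u v : ℝ) (d : ℝ → ℝ) (hd : Harmonic β d) (huv : u < v)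
    (h2 : d u ≤ d v) : ∀ x, v ≤ x → d v ≤ d x := by
  rcases le_or_gt 0 (deriv d 0) with hc | hc
  · have hmono : Monotone d := by
      apply monotone_of_deriv_nonneg hd.1
      intro y
      rw [harmonic_deriv_eq β d hd y]
      exact mul_nonneg hc (Real.exp_pos _).le
    exact fun x hx => hmono hx
  · have hanti : StrictAnti d := by
      apply strictAnti_of_deriv_neg
      intro y
      rw [harmonic_deriv_eq β d hd y]
      exact mul_neg_of_neg_of_pos hc (Real.exp_pos _)
    exact absurd h2 (not_le.mpr (hanti huv))

lemma harmonic_sub {β : ℝ} {g h : ℝ → ℝ} (hg : Harmonic β g) (hh : Harmonic β h) :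
    Harmonic β (fun t => g t - h t) := by
  obtain ⟨g1, g2, g3⟩ := hg; obtain ⟨h1, h2, h3⟩ := hh
  have hd : deriv (fun t => g t - h t) = fun t => deriv g t - deriv h t := by
    funext t; exact deriv_sub (g1 t) (h1 t)
  refine ⟨g1.sub h1, ?_, ?_⟩
  · rw [hd]; exact g2.sub h2
  · intro x
    rw [hd, deriv_fun_sub (g2 x) (h2 x)]
    have := g3 x; have := h3 x; linarith

/-- With `a₀ < ⋯ < a_m` and `f : ℝ → ℝ` subharmonic on all of `ℝ`, the
piecewise harmonic interpolation `I(f)` (extended outside `[a₀,a_m]` by the extreme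
harmonic pieces `f₀` and `f_{m−1}`) satisfies `I(f) ≤ f` on `(−∞, a₀)` and on
`(a_m, +∞)`. -/
theorem stmt7 (β : ℝ) (m : ℕ) (hm : 0 < m) (a : Fin (m + 1) → ℝ)
    (ha : StrictMono a) (f If : ℝ → ℝ) (fs : Fin m → ℝ → ℝ)
    (hsub : SubharmonicOn β f Set.univ)
    (hfs_harm : ∀ i, Harmonic β (fs i))
    (hfs_interp : ∀ i : Fin m,
      fs i (a i.castSucc) = f (a i.castSucc) ∧ fs i (a i.succ) = f (a i.succ))
    (hIf : ∀ i : Fin m, ∀ x ∈ Set.Icc (a i.castSucc) (a i.succ), If x = fs i x)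
    (hleft : ∀ x < a 0, If x = fs ⟨0, hm⟩ x)
    (hright : ∀ x > a (Fin.last m), If x = fs ⟨m - 1, by omega⟩ x) :
    (∀ x < a 0, If x ≤ f x) ∧ (∀ x > a (Fin.last m), If x ≤ f x) := by
  constructor
  · intro x hx
    set i0 : Fin m := ⟨0, hm⟩ with hi0
    have h0 : (i0.castSucc : Fin (m+1)) = 0 := by
      ext; simp [hi0]
    have ha01 : a 0 < a i0.succ := by
      rw [← h0]; exact ha (Fin.castSucc_lt_succ (i := i0))
    have hx1 : x < a i0.succ := hx.trans ha01
    obtain ⟨h, hh, hhu, hhv⟩ :=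
      harmonic_interp β x (a i0.succ) (f x) (f (a i0.succ)) hx1
    have hcomp := hsub x (a i0.succ) hx1 (Set.subset_univ _) h hh hhu.ge hhv.ge
    have hfa0 : f (a 0) ≤ h (a 0) := hcomp (a 0) ⟨hx.le, ha01.le⟩
    obtain ⟨hi1, hi2⟩ := hfs_interp i0
    rw [h0] at hi1
    set d : ℝ → ℝ := fun t => h t - fs i0 t with hd
    have hdh : Harmonic β d := harmonic_sub hh (hfs_harm i0)
    have hdvu : d (a i0.succ) ≤ d (a 0) := by
      simp only [hd]
      rw [hi1, hi2, hhv]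
      simp
      linarith
    have hkey := harm_left β (a 0) (a i0.succ) d hdh ha01 hdvu x hx.le
    have hdu : 0 ≤ d (a 0) := by
      simp only [hd]; rw [hi1]; linarith
    have hdx : 0 ≤ d x := le_trans hdu hkey
    simp only [hd] at hdx
    rw [hleft x hx]
    have : fs i0 x ≤ h x := by linarith
    rw [← hhu]
    exact this
  · intro x hx
    set j : Fin m := ⟨m - 1, by omega⟩ with hj0
    have hj : (j.succ : Fin (m+1)) = Fin.last m := by
      ext; simp [hj0, Fin.last]; omega
    have hau : a j.castSucc < a (Fin.last m) := by
      rw [← hj]; exact ha (Fin.castSucc_lt_succ (i := j))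
    have hux : a j.castSucc < x := hau.trans hx
    obtain ⟨h, hh, hhu, hhv⟩ :=
      harmonic_interp β (a j.castSucc) x (f (a j.castSucc)) (f x) hux
    have hcomp := hsub _ x hux (Set.subset_univ _) h hh hhu.ge hhv.ge
    have hfam : f (a (Fin.last m)) ≤ h (a (Fin.last m)) := hcomp _ ⟨hau.le, hx.le⟩
    obtain ⟨hi1, hi2⟩ := hfs_interp j
    rw [hj] at hi2
    set d : ℝ → ℝ := fun t => h t - fs j t with hd
    have hdh : Harmonic β d := harmonic_sub hh (hfs_harm j)
    have hduv : d (a j.castSucc) ≤ d (a (Fin.last m)) := by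
      simp only [hd]
      rw [hi1, hi2, hhu]
      simp
      linarith
    have hkey := harm_right β (a j.castSucc) (a (Fin.last m)) d hdh hau hduv x hx.le
    have hdv : 0 ≤ d (a (Fin.last m)) := by
      simp only [hd]; rw [hi2]; linarith
    have hdx : 0 ≤ d x := le_trans hdv hkey
    simp only [hd] at hdx
    rw [hright x hx]
    have hfsj : fs j x ≤ h x := by linarith
    rw [← hhv]
    exact hfsj
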